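/- Let $G$ be a topological group in which every 2-generated subgroup is discrete. Then $G$ is weakly 2-swelling: for all compact $A, B \subseteq G$ and $a, b \in G$ with $aA \cap bB = \emptyset$, the inclusion $aA \cup bB \subseteq A \cup B$ implies $aA \cup bB = A \cup B$ and $A \cap B = \emptyset$. -/

import Mathlib

open Pointwise

-- counting lemma for finite sets
lemma aux_count {G : Type*} [Group G] (A' B' : Set G) (hA : A'.Finite) (hB : B'.Finite)
    (a b : G) (hdisj : a • A' ∩ b • B' = ∅) (hsub : a • A' ∪ b • B' ⊆ A' ∪ B') :
    a • A' ∪ b • B' = A' ∪ B' ∧ A' ∩ B' = ∅ := by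
  have hAB : (A' ∪ B').Finite := hA.union hB
  have hd : Disjoint (a • A') (b • B') := Set.disjoint_iff_inter_eq_empty.2 hdisj
  have hcard : (a • A' ∪ b • B').ncard = A'.ncard + B'.ncard := by
    rw [Set.ncard_union_eq hd (hA.smul_set) (hB.smul_set), Set.ncard_smul_set,
      Set.ncard_smul_set]
  have hle : A'.ncard + B'.ncard ≤ (a • A' ∪ b • B').ncard := hcard.ge
  have h2 : (A' ∪ B').ncard ≤ (a • A' ∪ b • B').ncard := by
    calc (A' ∪ B').ncard ≤ A'.ncard + B'.ncard := Set.ncard_union_le _ _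
    _ = _ := hcard.symm
  have heq : a • A' ∪ b • B' = A' ∪ B' := Set.eq_of_subset_of_ncard_le hsub h2 hAB
  refine ⟨heq, ?_⟩
  have h3 := Set.ncard_union_add_ncard_inter A' B' hA hB
  rw [← heq, hcard] at h3
  have : (A' ∩ B').ncard = 0 := by omega
  rwa [Set.ncard_eq_zero (hA.inter_of_left B')] at this

theorem stmt_9 {G : Type*} [Group G] [TopologicalSpace G] [IsTopologicalGroup G]
    (hd : ∀ a b : G, DiscreteTopology (Subgroup.closure {a, b}))
    (A B : Set G) (hA : IsCompact A) (hB : IsCompact B) (a b : G)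
    (hdisj : a • A ∩ b • B = ∅) (h1 : a • A ∪ b • B ⊆ A ∪ B) :
    a • A ∪ b • B = A ∪ B ∧ A ∩ B = ∅ := by
  -- G is Hausdorff
  haveI : T2Space G := by
    apply IsTopologicalGroup.t2Space_of_one_sep
    intro x hx
    haveI := hd x x
    have h1x : (1 : G) ∈ Subgroup.closure ({x, x} : Set G) := one_mem _
    have hop : IsOpen ({(⟨1, h1x⟩ : Subgroup.closure ({x, x} : Set G))} :
        Set (Subgroup.closure ({x, x} : Set G))) := isOpen_discrete _
    rw [isOpen_induced_iff] at hop
    obtain ⟨U, hU, hUeq⟩ := hop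
    refine ⟨U, hU.mem_nhds ?_, fun hxU => ?_⟩
    · have : (⟨1, h1x⟩ : Subgroup.closure ({x, x} : Set G)) ∈
        Subtype.val ⁻¹' U := by rw [hUeq]; rfl
      exact this
    · have hxm : x ∈ Subgroup.closure ({x, x} : Set G) :=
        Subgroup.subset_closure (by simp)
      have : (⟨x, hxm⟩ : Subgroup.closure ({x, x} : Set G)) ∈ Subtype.val ⁻¹' U := hxU
      rw [hUeq] at this
      exact hx (congrArg Subtype.val this)
  set H := Subgroup.closure ({a, b} : Set G) with hH
  haveI : DiscreteTopology H := hd a b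
  have haH : a ∈ H := Subgroup.subset_closure (by simp)
  have hbH : b ∈ H := Subgroup.subset_closure (by simp)
  have hHcl : IsClosed (H : Set G) := Subgroup.isClosed_of_discrete
  -- right cosets
  set C : G → Set G := fun x => {y : G | y * x⁻¹ ∈ H} with hC
  have hCcl : ∀ x, IsClosed (C x) := fun x =>
    hHcl.preimage (continuous_mul_right x⁻¹)
  have hCdisc : ∀ x, DiscreteTopology (C x) := by
    intro x
    have himg : (Homeomorph.mulRight x) '' (H : Set G) = C x := by
      ext y
      simp only [Set.mem_image, hC, Set.mem_setOf_eq, Homeomorph.coe_mulRight]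
      constructor
      · rintro ⟨h, hh, rfl⟩; simpa using hh
      · intro hy; exact ⟨y * x⁻¹, hy, by group⟩
    haveI : DiscreteTopology ((H : Set G) : Set G) := hd a b
    have := ((Homeomorph.mulRight x).image (H : Set G)).symm.isEmbedding.discreteTopology
    rwa [himg] at this
  -- translation moves within cosets
  have hkey : ∀ (c : G), c ∈ H → ∀ (S : Set G) (x : G), c • (S ∩ C x) = (c • S) ∩ C x := by
    intro c hc S x
    ext y
    simp only [Set.mem_inter_iff, Set.mem_smul_set_iff_inv_smul_mem, smul_eq_mul, hC,
      Set.mem_setOf_eq]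
    constructor
    · rintro ⟨hyS, hyC⟩
      refine ⟨hyS, ?_⟩
      have := mul_mem hc hyC
      simpa [← mul_assoc] using this
    · rintro ⟨hyS, hyC⟩
      refine ⟨hyS, ?_⟩
      have := mul_mem (inv_mem hc) hyC
      rwa [← mul_assoc] at this
  -- finiteness of compact ∩ coset
  have hfin : ∀ (S : Set G), IsCompact S → ∀ x, (S ∩ C x).Finite := by
    intro S hS x
    haveI := hCdisc x
    haveI : DiscreteTopology ((S ∩ C x : Set G)) :=
      DiscreteTopology.of_subset (hCdisc x) Set.inter_subset_right
    exact (hS.inter_right (hCcl x)).finite (isDiscrete_iff_discreteTopology.2 this)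
  -- per-coset result
  have hper : ∀ x : G, a • (A ∩ C x) ∪ b • (B ∩ C x) = (A ∩ C x) ∪ (B ∩ C x) ∧
      (A ∩ C x) ∩ (B ∩ C x) = ∅ := by
    intro x
    apply aux_count _ _ (hfin A hA x) (hfin B hB x)
    · rw [hkey a haH, hkey b hbH]
      apply Set.eq_empty_of_subset_empty
      rw [← hdisj]
      exact Set.inter_subset_inter (Set.inter_subset_left) (Set.inter_subset_left)
    · rw [hkey a haH, hkey b hbH, ← Set.union_inter_distrib_right, ← Set.union_inter_distrib_right]
      exact Set.inter_subset_inter_left _ h1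
  have hmemC : ∀ x : G, x ∈ C x := by
    intro x; simp [hC, one_mem]
  constructor
  · refine Set.Subset.antisymm h1 fun y hy => ?_
    have h2 : y ∈ (A ∩ C y) ∪ (B ∩ C y) := by
      rcases hy with hy | hy
      · exact Or.inl ⟨hy, hmemC y⟩
      · exact Or.inr ⟨hy, hmemC y⟩
    rw [← (hper y).1, hkey a haH, hkey b hbH] at h2
    rcases h2 with h2 | h2
    · exact Or.inl h2.1
    · exact Or.inr h2.1
  · apply Set.eq_empty_iff_forall_notMem.2
    rintro y ⟨hyA, hyB⟩
    have : y ∈ (A ∩ C y) ∩ (B ∩ C y) := ⟨⟨hyA, hmemC y⟩, ⟨hyB, hmemC y⟩⟩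
    rw [(hper y).2] at this
    exact this
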